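/- Taylor estimate for the Stirling ratio: let C > 0 be real, n ≥ 16C² an even integer, and k an integer with 1 ≤ k ≤ C√n. Set T := (1 − k/n)^{n−k} / (1 − 2k/n)^{n/2 − k}. Then −k²/(2n) − 15k³/n² ≤ ln T ≤ −k²/(2n) + 15k³/n². -/

import Mathlib

lemma taylor_log_bound (y : ℝ) (hy0 : 0 < y) (hy : y ≤ 1/2) :
    |y + y ^ 2 / 2 + Real.log (1 - y)| ≤ 2 * y ^ 3 := by
  have h := Real.abs_log_sub_add_sum_range_le (x := y)
    (by rw [abs_of_pos hy0]; linarith) 2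
  simp [Finset.sum_range_succ, abs_of_pos hy0] at h
  have h2 : y ^ 3 / (1 - y) ≤ 2 * y ^ 3 := by
    rw [div_le_iff₀ (by linarith)]
    nlinarith [pow_pos hy0 3]
  calc |y + y ^ 2 / 2 + Real.log (1 - y)| ≤ y ^ 3 / (1 - y) := by
        convert h using 2; ring
    _ ≤ 2 * y ^ 3 := h2


set_option maxHeartbeats 1000000 in
/-- **Taylor estimate for the Stirling ratio.** For real `C > 0`, an even integer
`n ≥ 16C²`, and an integer `1 ≤ k ≤ C√n`, the quantity
`T = (1 - k/n)^{n-k} / (1 - 2k/n)^{n/2 - k}` satisfies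
`-k²/(2n) - 15k³/n² ≤ ln T ≤ -k²/(2n) + 15k³/n²`. -/
theorem stirling_ratio_taylor
    (C : ℝ) (hC : 0 < C) (n : ℕ) (hev : Even n) (hn : 16 * C ^ 2 ≤ (n : ℝ))
    (k : ℕ) (hk1 : 1 ≤ k) (hk2 : (k : ℝ) ≤ C * Real.sqrt n) :
    -((k : ℝ) ^ 2 / (2 * n)) - 15 * (k : ℝ) ^ 3 / (n : ℝ) ^ 2
        ≤ Real.log ((1 - (k : ℝ) / n) ^ (n - k) / (1 - 2 * (k : ℝ) / n) ^ (n / 2 - k))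
    ∧ Real.log ((1 - (k : ℝ) / n) ^ (n - k) / (1 - 2 * (k : ℝ) / n) ^ (n / 2 - k))
        ≤ -((k : ℝ) ^ 2 / (2 * n)) + 15 * (k : ℝ) ^ 3 / (n : ℝ) ^ 2 := by
  obtain ⟨m, hm⟩ := hev
  have hN0 : (0:ℝ) < n := lt_of_lt_of_le (by positivity) hn
  have hsqrt : 4 * C ≤ Real.sqrt n := by
    have h1 : Real.sqrt (16 * C ^ 2) ≤ Real.sqrt n := Real.sqrt_le_sqrt hn
    rwa [show (16:ℝ) * C ^ 2 = (4*C)^2 by ring, Real.sqrt_sq (by positivity)] at h1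
  have hk4 : 4 * (k:ℝ) ≤ n := by
    have h2 : C * Real.sqrt n ≤ (Real.sqrt n / 4) * Real.sqrt n :=
      mul_le_mul_of_nonneg_right (by linarith) (Real.sqrt_nonneg _)
    rw [div_mul_eq_mul_div, Real.mul_self_sqrt hN0.le] at h2
    linarith
  have hK1 : (1:ℝ) ≤ (k:ℝ) := by exact_mod_cast hk1
  have hkn : k ≤ n := by
    have : (k:ℝ) ≤ n := by linarith
    exact_mod_cast this
  have hmn : (n:ℝ) = (m:ℝ) + (m:ℝ) := by exact_mod_cast congrArg (Nat.cast (R := ℝ)) hm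
  have hk2n : k ≤ n / 2 := by
    have hkm : k ≤ m := by
      have : (k:ℝ) ≤ (m:ℝ) := by linarith
      exact_mod_cast this
    omega
  have hhalf : ((n / 2 : ℕ) : ℝ) = (n:ℝ) / 2 := by
    have h : n / 2 = m := by omega
    rw [h]; linarith
  have hx0 : (0:ℝ) < (k:ℝ) / n := by positivity
  have hx4 : (k:ℝ) / n ≤ 1/4 := by rw [div_le_iff₀ hN0]; linarith
  have h1m : (0:ℝ) < 1 - (k:ℝ)/n := by linarith
  have h2x : 2*(k:ℝ)/n ≤ 1/2 := by rw [div_le_iff₀ hN0]; linarith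
  have h2m : (0:ℝ) < 1 - 2*(k:ℝ)/n := by linarith
  have hlog : Real.log ((1 - (k : ℝ) / n) ^ (n - k) / (1 - 2 * (k : ℝ) / n) ^ (n / 2 - k))
      = ((n:ℝ) - k) * Real.log (1 - (k:ℝ)/n) - ((n:ℝ)/2 - k) * Real.log (1 - 2*(k:ℝ)/n) := by
    rw [Real.log_div (pow_ne_zero _ (ne_of_gt h1m)) (pow_ne_zero _ (ne_of_gt h2m)),
      Real.log_pow, Real.log_pow, Nat.cast_sub hkn, Nat.cast_sub hk2n, hhalf]
  rw [hlog]
  obtain ⟨x, hxe⟩ : ∃ x : ℝ, (k:ℝ)/n = x := ⟨_, rfl⟩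
  have hKx : (k:ℝ) = x * n := by rw [← hxe]; field_simp
  have hx0' : (0:ℝ) < x := hxe ▸ hx0
  have hx4' : x ≤ 1/4 := hxe ▸ hx4
  have hb1 := taylor_log_bound x hx0' (by linarith)
  have hb2 := taylor_log_bound (2*x) (by linarith) (by
    rw [← hxe]; rw [mul_div_assoc] at h2x; linarith)
  rw [show (1:ℝ) - 2*(k:ℝ)/n = 1 - 2*x by rw [← hxe]; ring,
    show (1:ℝ) - (k:ℝ)/n = 1 - x by rw [hxe]]
  have hq2 : (k:ℝ)^2 / (2*(n:ℝ)) = x^2 * n / 2 := by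
    rw [← hxe]; field_simp
  have hq3 : 15 * (k:ℝ)^3 / (n:ℝ)^2 = 15 * (x^3 * n) := by
    rw [← hxe]; field_simp
  rw [hq2, hq3, hKx]
  set L1 := Real.log (1 - x) with hL1def
  set L2 := Real.log (1 - 2*x) with hL2def
  clear hC hn hk2 hsqrt hk4 hK1 hmn hhalf hx0 hx4 h2x hlog hq2 hq3 hKx hk1 hkn hk2n hm
  rw [abs_le] at hb1 hb2
  obtain ⟨hb1l, hb1u⟩ := hb1
  obtain ⟨hb2l, hb2u⟩ := hb2
  have hL1u : L1 ≤ -x - x^2/2 + 2*x^3 := by linarith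
  have hL1l : -x - x^2/2 - 2*x^3 ≤ L1 := by linarith
  have hL2u : L2 ≤ -2*x - 2*x^2 + 16*x^3 := by nlinarith
  have hL2l : -2*x - 2*x^2 - 16*x^3 ≤ L2 := by nlinarith
  have hNK : (0:ℝ) ≤ (n:ℝ) - x * n := by nlinarith
  have hNK2 : (0:ℝ) ≤ (n:ℝ)/2 - x * n := by nlinarith
  have p1u : ((n:ℝ) - x*n) * L1 ≤ ((n:ℝ) - x*n) * (-x - x^2/2 + 2*x^3) :=
    mul_le_mul_of_nonneg_left hL1u hNK
  have p1l : ((n:ℝ) - x*n) * (-x - x^2/2 - 2*x^3) ≤ ((n:ℝ) - x*n) * L1 :=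
    mul_le_mul_of_nonneg_left hL1l hNK
  have p2u : ((n:ℝ)/2 - x*n) * L2 ≤ ((n:ℝ)/2 - x*n) * (-2*x - 2*x^2 + 16*x^3) :=
    mul_le_mul_of_nonneg_left hL2u hNK2
  have p2l : ((n:ℝ)/2 - x*n) * (-2*x - 2*x^2 - 16*x^3) ≤ ((n:ℝ)/2 - x*n) * L2 :=
    mul_le_mul_of_nonneg_left hL2l hNK2
  have c3 : (0:ℝ) < n * x^3 := by positivity
  have c4 : (0:ℝ) < n * x^4 := by positivity
  constructor
  · nlinarith [p1l, p2u, c3, c4]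
  · nlinarith [p1u, p2l, c3, c4]
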